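/- arXiv:math/0609616 — 3 statements merged into one kernel-verified Lean document; each statement's English description precedes it below -/
import Mathlib

section
/- For every integer n ≥ 2, if s ∈ B_n is a simple element conjugate to δ in B_n, then there exists a simple element α ∈ B_n with α⁻¹ s α = δ. -/
namespace Braid

/-- The braid relations on `m` generators (0-indexed; generator `i` is `σ_{i+1}`). -/
def braidRels (m : ℕ) : Set (FreeGroup (Fin m)) :=
  { r | (∃ i j : Fin m, i.val + 1 < j.val ∧
          r = FreeGroup.of i * FreeGroup.of j * (FreeGroup.of j * FreeGroup.of i)⁻¹) ∨
        (∃ i j : Fin m, j.val = i.val + 1 ∧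
          r = FreeGroup.of i * FreeGroup.of j * FreeGroup.of i *
              (FreeGroup.of j * FreeGroup.of i * FreeGroup.of j)⁻¹) }

/-- The braid group `B_n`, presented with generators `σ_1, …, σ_{n-1}` and the braid relations. -/
abbrev BraidGroup (n : ℕ) : Type := PresentedGroup (braidRels (n - 1))

/-- The Artin generator `σ_k` of `B_n`, for `1 ≤ k ≤ n - 1` (junk value `1` otherwise). -/
def σ (n : ℕ) (k : ℕ) : BraidGroup n :=
  if h : 1 ≤ k ∧ k ≤ n - 1 then PresentedGroup.of ⟨k - 1, by omega⟩ else 1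

/-- `sigmaBr n j i = σ_{j-1} σ_{j-2} ⋯ σ_i` (the identity when `j ≤ i`);
this is the element `σ_{[j→i]}`. -/
def sigmaBr (n : ℕ) (j i : ℕ) : BraidGroup n :=
  ((List.range (j - i)).map (fun k => σ n (j - 1 - k))).prod

/-- `δ = σ_{n-1} σ_{n-2} ⋯ σ_1 ∈ B_n`. -/
def braidDelta (n : ℕ) : BraidGroup n := sigmaBr n n 1

/-- `ε = σ_1 (σ_{n-1} σ_{n-2} ⋯ σ_1) ∈ B_n`. -/
def braidEps (n : ℕ) : BraidGroup n := σ n 1 * braidDelta n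

/-- The half twist `Δ = σ_1 (σ_2 σ_1) ⋯ (σ_{n-1} ⋯ σ_1) ∈ B_n`. -/
def halfTwist (n : ℕ) : BraidGroup n :=
  ((List.range (n - 1)).map (fun j => sigmaBr n (j + 2) 1)).prod

/-- An element `X ∈ B_n` is periodic if `X^m = Δ^{2j}` for some `m ≥ 1` and some integer `j`. -/
def IsPeriodic {n : ℕ} (X : BraidGroup n) : Prop :=
  ∃ m : ℕ, 1 ≤ m ∧ ∃ j : ℤ, X ^ m = halfTwist n ^ (2 * j)

/-- The submonoid of positive braids, generated by `σ_1, …, σ_{n-1}`. -/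
def positiveMonoid (n : ℕ) : Submonoid (BraidGroup n) :=
  Submonoid.closure { x | ∃ k, 1 ≤ k ∧ k ≤ n - 1 ∧ x = σ n k }

/-- An element `s ∈ B_n` is simple if both `s` and `s⁻¹Δ` are positive braids. -/
def IsSimpleElt {n : ℕ} (s : BraidGroup n) : Prop :=
  s ∈ positiveMonoid n ∧ s⁻¹ * halfTwist n ∈ positiveMonoid n

lemma swap_comm_of_ne {a b c d : ℕ} (h1 : a ≠ c) (h2 : a ≠ d) (h3 : b ≠ c) (h4 : b ≠ d) :
    Equiv.swap a b * Equiv.swap c d = Equiv.swap c d * Equiv.swap a b := by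
  ext x
  simp only [Equiv.Perm.mul_apply, Equiv.swap_apply_def]
  split_ifs <;> omega

set_option maxHeartbeats 1000000 in
lemma braid_swap (a : ℕ) :
    Equiv.swap a (a + 1) * Equiv.swap (a + 1) (a + 2) * Equiv.swap a (a + 1) =
      Equiv.swap (a + 1) (a + 2) * Equiv.swap a (a + 1) * Equiv.swap (a + 1) (a + 2) := by
  ext x
  simp only [Equiv.Perm.mul_apply, Equiv.swap_apply_def]
  split_ifs <;> omega

/-- The homomorphism `π : B_n → Sym(ℕ)` sending `σ_k` to the transposition `(k, k+1)`. -/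
def permHom (n : ℕ) : BraidGroup n →* Equiv.Perm ℕ :=
  PresentedGroup.toGroup (f := fun i : Fin (n - 1) => Equiv.swap (i.val + 1) (i.val + 2))
    (by
      rintro r (⟨i, j, hij, rfl⟩ | ⟨i, j, hij, rfl⟩) <;>
        simp only [map_mul, map_inv, FreeGroup.lift_apply_of, mul_inv_eq_one]
      · exact swap_comm_of_ne (by omega) (by omega) (by omega) (by omega)
      · rw [hij]
        exact braid_swap (i.val + 1))

/-- The exponent-sum homomorphism, multiplicatively valued. -/
def expSumHom (n : ℕ) : BraidGroup n →* Multiplicative ℤ :=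
  PresentedGroup.toGroup (f := fun _ : Fin (n - 1) => Multiplicative.ofAdd (1 : ℤ))
    (by
      rintro r (⟨i, j, hij, rfl⟩ | ⟨i, j, hij, rfl⟩) <;>
        simp only [map_mul, map_inv, FreeGroup.lift_apply_of] <;> group)

/-- The exponent sum `e : B_n → ℤ`. -/
def e {n : ℕ} (X : BraidGroup n) : ℤ := Multiplicative.toAdd (expSumHom n X)

end Braid

namespace Braid

/-- Defining relations of the Artin–Tits group of type `B` on `m` generators
(0-indexed; generator `i` is `s_{i+1}`). -/
def typeBRels (m : ℕ) : Set (FreeGroup (Fin m)) :=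
  { r | (∃ i j : Fin m, i.val + 1 < j.val ∧
          r = FreeGroup.of i * FreeGroup.of j * (FreeGroup.of j * FreeGroup.of i)⁻¹) ∨
        (∃ i j : Fin m, j.val = i.val + 1 ∧ 1 ≤ i.val ∧
          r = FreeGroup.of i * FreeGroup.of j * FreeGroup.of i *
              (FreeGroup.of j * FreeGroup.of i * FreeGroup.of j)⁻¹) ∨
        (∃ i j : Fin m, i.val = 0 ∧ j.val = 1 ∧
          r = FreeGroup.of i * FreeGroup.of j * FreeGroup.of i * FreeGroup.of j *
              (FreeGroup.of j * FreeGroup.of i * FreeGroup.of j * FreeGroup.of i)⁻¹) }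

/-- The Artin–Tits group `A(B_m)` of type `B` with `m` generators `s_1, …, s_m`. -/
abbrev ArtinTitsB (m : ℕ) : Type := PresentedGroup (typeBRels m)

/-- The generator `s_k` of `A(B_m)`, for `1 ≤ k ≤ m` (junk value `1` otherwise). -/
def sGen (m : ℕ) (k : ℕ) : ArtinTitsB m :=
  if h : 1 ≤ k ∧ k ≤ m then PresentedGroup.of ⟨k - 1, by omega⟩ else 1

/-- The band generator `a_{t,s} = (σ_{t-1}⋯σ_{s+1}) σ_s (σ_{s+1}⁻¹⋯σ_{t-1}⁻¹) ∈ B_m`. -/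
def bandGen (m : ℕ) (t s : ℕ) : BraidGroup m :=
  sigmaBr m t (s + 1) * σ m s * (sigmaBr m t (s + 1))⁻¹

end Braid
namespace Braid

variable {n : ℕ}

lemma braidRel_eq_one {m : ℕ} {r : FreeGroup (Fin m)} (h : r ∈ braidRels m) :
    (QuotientGroup.mk r : PresentedGroup (braidRels m)) = 1 :=
  (QuotientGroup.eq_one_iff _).mpr (Subgroup.subset_normalClosure h)

lemma braidRel_pair {m : ℕ} {a b : FreeGroup (Fin m)} (h : a * b⁻¹ ∈ braidRels m) :
    (QuotientGroup.mk a : PresentedGroup (braidRels m)) = QuotientGroup.mk b := by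
  have := braidRel_eq_one h
  rw [QuotientGroup.mk_mul, QuotientGroup.mk_inv, mul_inv_eq_one] at this
  exact this

lemma sigma_def {k : ℕ} (h1 : 1 ≤ k) (h2 : k ≤ n - 1) :
    σ n k = PresentedGroup.of ⟨k - 1, by omega⟩ := by
  simp [σ, h1, h2]

lemma sigma_comm {i j : ℕ} (hi : 1 ≤ i) (hij : i + 1 < j) (hj : j ≤ n - 1) :
    σ n i * σ n j = σ n j * σ n i := by
  have h := braidRel_pair (m := n - 1)
    (a := FreeGroup.of (⟨i - 1, by omega⟩ : Fin (n-1)) * FreeGroup.of (⟨j - 1, by omega⟩ : Fin (n-1)))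
    (b := FreeGroup.of (⟨j - 1, by omega⟩ : Fin (n-1)) * FreeGroup.of (⟨i - 1, by omega⟩ : Fin (n-1)))
    (Or.inl ⟨⟨i - 1, by omega⟩, ⟨j - 1, by omega⟩, by simp; omega, rfl⟩)
  rw [QuotientGroup.mk_mul, QuotientGroup.mk_mul] at h
  rw [sigma_def hi (by omega), sigma_def (by omega : 1 ≤ j) hj]
  exact h

lemma sigma_braid {i : ℕ} (hi : 1 ≤ i) (hij : i + 1 ≤ n - 1) :
    σ n i * σ n (i+1) * σ n i = σ n (i+1) * σ n i * σ n (i+1) := by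
  have h := braidRel_pair (m := n - 1)
    (a := FreeGroup.of (⟨i - 1, by omega⟩ : Fin (n-1)) * FreeGroup.of (⟨i, by omega⟩ : Fin (n-1)) *
          FreeGroup.of (⟨i - 1, by omega⟩ : Fin (n-1)))
    (b := FreeGroup.of (⟨i, by omega⟩ : Fin (n-1)) * FreeGroup.of (⟨i - 1, by omega⟩ : Fin (n-1)) *
          FreeGroup.of (⟨i, by omega⟩ : Fin (n-1)))
    (Or.inr ⟨⟨i - 1, by omega⟩, ⟨i, by omega⟩, by simp; omega, rfl⟩)
  rw [QuotientGroup.mk_mul, QuotientGroup.mk_mul, QuotientGroup.mk_mul, QuotientGroup.mk_mul] at h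
  rw [sigma_def hi (by omega), sigma_def (by omega : 1 ≤ i + 1) hij]
  exact h

lemma sigma_comm' {i j : ℕ} (hi : 1 ≤ i) (hj : 1 ≤ j) (hi' : i ≤ n - 1) (hj' : j ≤ n - 1)
    (hij : i + 2 ≤ j ∨ j + 2 ≤ i) : σ n i * σ n j = σ n j * σ n i := by
  rcases hij with h | h
  · exact sigma_comm hi (by omega) hj'
  · exact (sigma_comm hj (by omega) hi').symm

end Braid
namespace Braid

variable {n : ℕ}

lemma sigma_junk {k : ℕ} (h : ¬(1 ≤ k ∧ k ≤ n - 1)) : σ n k = 1 := by simp [σ, h]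

lemma sigma_commute {k m : ℕ} (hk : 1 ≤ k) (hk' : k ≤ n - 1) (hm : 1 ≤ m)
    (h : k + 2 ≤ m ∨ m + 2 ≤ k) : Commute (σ n k) (σ n m) := by
  by_cases hm' : m ≤ n - 1
  · exact sigma_comm' hk hm hk' hm' (by omega)
  · rw [sigma_junk (k := m) (by omega)]
    exact Commute.one_right _

lemma sigmaBr_nil {j i : ℕ} (h : j ≤ i) : sigmaBr n j i = 1 := by
  simp [sigmaBr, Nat.sub_eq_zero_of_le h]

lemma sigmaBr_cons {j i : ℕ} (h : i ≤ j) : sigmaBr n (j+1) i = σ n j * sigmaBr n j i := by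
  unfold sigmaBr
  rw [show j + 1 - i = (j - i) + 1 by omega, List.range_succ_eq_map, List.map_cons,
    List.map_map, List.prod_cons]
  have h2 : List.map ((fun k => σ n (j + 1 - 1 - k)) ∘ Nat.succ) (List.range (j - i))
      = List.map (fun k => σ n (j - 1 - k)) (List.range (j - i)) :=
    List.map_congr_left (fun a ha => by simp only [Function.comp_apply]; congr 1; omega)
  rw [h2]
  norm_num

lemma sigmaBr_snoc {j i : ℕ} (h : i < j) : sigmaBr n j i = sigmaBr n j (i+1) * σ n i := by
  unfold sigmaBr
  rw [show j - i = (j - (i+1)) + 1 by omega, List.range_succ]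
  simp only [List.map_append, List.prod_append, List.map_cons, List.map_nil, List.prod_cons,
    List.prod_nil, mul_one]
  congr 2
  omega

lemma sigma_sigmaBr_comm {k j i : ℕ} (hk : 1 ≤ k) (hk' : k ≤ n - 1) (hi : 1 ≤ i)
    (h : ∀ m, i ≤ m → m + 1 ≤ j → (k + 2 ≤ m ∨ m + 2 ≤ k)) :
    Commute (σ n k) (sigmaBr n j i) := by
  apply Commute.list_prod_right
  intro y hy
  rw [List.mem_map] at hy
  obtain ⟨t, ht, rfl⟩ := hy
  rw [List.mem_range] at ht
  exact sigma_commute hk hk' (by omega) (h _ (by omega) (by omega))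

lemma shift_aux (d : ℕ) : ∀ j v : ℕ, 1 ≤ j → v = j + 1 + d → v ≤ n - 1 →
    sigmaBr n (v+1) 1 * σ n (j+1) = σ n j * sigmaBr n (v+1) 1 := by
  induction d with
  | zero =>
    intro j v hj hv hvn
    obtain rfl : v = j + 1 := by omega
    rw [sigmaBr_cons (by omega), sigmaBr_cons (by omega)]
    have hc : Commute (σ n (j+1)) (sigmaBr n j 1) :=
      sigma_sigmaBr_comm (by omega) hvn (by omega) (fun m hm hm' => by omega)
    calc σ n (j+1) * (σ n j * sigmaBr n j 1) * σ n (j+1)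
        = σ n (j+1) * σ n j * (sigmaBr n j 1 * σ n (j+1)) := by group
      _ = σ n (j+1) * σ n j * (σ n (j+1) * sigmaBr n j 1) := by rw [← hc.eq]
      _ = (σ n (j+1) * σ n j * σ n (j+1)) * sigmaBr n j 1 := by group
      _ = (σ n j * σ n (j+1) * σ n j) * sigmaBr n j 1 := by
          rw [← sigma_braid (by omega) hvn]
      _ = σ n j * (σ n (j+1) * (σ n j * sigmaBr n j 1)) := by group
  | succ d ih =>
    intro j v hj hv hvn
    have hv' : v - 1 = j + 1 + d := by omega
    rw [sigmaBr_cons (by omega : 1 ≤ v)]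
    have h1 : sigmaBr n v 1 * σ n (j+1) = σ n j * sigmaBr n v 1 := by
      have := ih j (v-1) hj hv' (by omega)
      rwa [show v - 1 + 1 = v by omega] at this
    calc σ n v * sigmaBr n v 1 * σ n (j+1)
        = σ n v * (σ n j * sigmaBr n v 1) := by rw [mul_assoc, h1]
      _ = σ n j * σ n v * sigmaBr n v 1 := by
          rw [← mul_assoc, (sigma_commute (k := v) (by omega) hvn (by omega) (by omega)).eq]
      _ = σ n j * (σ n v * sigmaBr n v 1) := by rw [mul_assoc]

lemma shift {j v : ℕ} (hj : 1 ≤ j) (hjv : j + 1 ≤ v) (hvn : v ≤ n - 1) :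
    sigmaBr n (v+1) 1 * σ n (j+1) = σ n j * sigmaBr n (v+1) 1 :=
  shift_aux (v - (j+1)) j v hj (by omega) hvn

end Braid
namespace Braid

variable {n : ℕ}

/-- Staircase product `T_{u_1} T_{u_2} ⋯` where `T_u = σ_u σ_{u-1} ⋯ σ_1`. -/
def Dstair (n : ℕ) : List ℕ → BraidGroup n
  | [] => 1
  | u :: us => sigmaBr n (u+1) 1 * Dstair n us

lemma Dstair_append (a b : List ℕ) : Dstair n (a ++ b) = Dstair n a * Dstair n b := by
  induction a with
  | nil => simp [Dstair]
  | cons u a ih => simp [Dstair, ih, mul_assoc]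

/-- Partial half twist `T_1 T_2 ⋯ T_m`. -/
def DeltaPart (n m : ℕ) : BraidGroup n :=
  ((List.range m).map (fun j => sigmaBr n (j+2) 1)).prod

lemma DeltaPart_eq_halfTwist : DeltaPart n (n-1) = halfTwist n := rfl

lemma DeltaPart_succ (m : ℕ) :
    DeltaPart n (m+1) = DeltaPart n m * sigmaBr n (m+2) 1 := by
  unfold DeltaPart
  rw [List.range_succ, List.map_append, List.prod_append]
  simp

lemma sigma_mem_pos {k : ℕ} (h1 : 1 ≤ k) (h2 : k ≤ n - 1) : σ n k ∈ positiveMonoid n :=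
  Submonoid.subset_closure ⟨k, h1, h2, rfl⟩

lemma prod_map_mem_pos {L : List ℕ} (h : ∀ k ∈ L, 1 ≤ k ∧ k ≤ n - 1) :
    ((L.map (σ n)).prod : BraidGroup n) ∈ positiveMonoid n := by
  apply Submonoid.list_prod_mem
  intro x hx
  rw [List.mem_map] at hx
  obtain ⟨k, hk, rfl⟩ := hx
  exact sigma_mem_pos (h k hk).1 (h k hk).2

lemma sigmaBr_mem_pos {v : ℕ} (h : v ≤ n - 1) :
    (sigmaBr n (v+1) 1 : BraidGroup n) ∈ positiveMonoid n := by
  apply Submonoid.list_prod_mem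
  intro x hx
  rw [List.mem_map] at hx
  obtain ⟨k, hk, rfl⟩ := hx
  rw [List.mem_range] at hk
  exact sigma_mem_pos (by omega) (by omega)

lemma Dstair_mem_pos {us : List ℕ} (h : ∀ u ∈ us, 1 ≤ u ∧ u ≤ n - 1) :
    Dstair n us ∈ positiveMonoid n := by
  induction us with
  | nil => exact Submonoid.one_mem _
  | cons u us ih =>
    exact Submonoid.mul_mem _ (sigmaBr_mem_pos (h u (by simp)).2)
      (ih (fun v hv => h v (by simp [hv])))

lemma push_through {m : ℕ} (hm : m + 1 ≤ n - 1) (C : List ℕ) (hC : ∀ c ∈ C, 1 ≤ c ∧ c ≤ m) :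
    (C.map (σ n)).prod * sigmaBr n (m+2) 1
      = sigmaBr n (m+2) 1 * ((C.map (· + 1)).map (σ n)).prod := by
  induction C with
  | nil => simp
  | cons c C ih =>
    have hc := hC c (by simp)
    have h1 : σ n c * sigmaBr n (m+2) 1 = sigmaBr n (m+2) 1 * σ n (c+1) := by
      have := shift (n := n) (j := c) (v := m+1) (by omega) (by omega) hm
      rw [show m + 1 + 1 = m + 2 from rfl] at this
      exact this.symm
    simp only [List.map_cons, List.prod_cons, mul_assoc]
    rw [ih (fun v hv => hC v (by simp [hv])), ← mul_assoc, h1, mul_assoc]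

lemma stair_complement : ∀ (m : ℕ), m ≤ n - 1 → ∀ us : List ℕ, us.Pairwise (· < ·) →
    (∀ u ∈ us, 1 ≤ u ∧ u ≤ m) →
    ∃ C : List ℕ, (∀ c ∈ C, 1 ≤ c ∧ c ≤ m) ∧
      DeltaPart n m = Dstair n us * ((C.map (σ n)).prod : BraidGroup n) := by
  intro m
  induction m with
  | zero =>
    intro _ us _ hb
    have : us = [] := by
      cases us with
      | nil => rfl
      | cons u us => exact absurd (hb u (by simp)) (by omega)
    subst this
    exact ⟨[], by simp, by simp [DeltaPart, Dstair]⟩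
  | succ m ih =>
    intro hm us hsort hb
    by_cases hmem : (m+1) ∈ us
    · -- last element is m+1
      have hne : us ≠ [] := by rintro rfl; simp at hmem
      set vs := us.dropLast with hvs
      have husdec : us = vs ++ [us.getLast hne] := (List.dropLast_append_getLast hne).symm
      have hpw : List.Pairwise (· < ·) (vs ++ [us.getLast hne]) := husdec ▸ hsort
      rw [List.pairwise_append] at hpw
      have hlt : ∀ x ∈ vs, x < us.getLast hne := fun x hx => hpw.2.2 x hx _ (by simp)
      have hlast : us.getLast hne = m + 1 := by
        have hmem' : (m+1) ∈ vs ++ [us.getLast hne] := husdec ▸ hmem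
        rw [List.mem_append, List.mem_singleton] at hmem'
        rcases hmem' with h | h
        · have h1 := hlt _ h
          have h2 := (hb _ (List.getLast_mem hne)).2
          omega
        · exact h.symm
      rw [hlast] at husdec hlt
      have hsortvs : vs.Pairwise (· < ·) := hpw.1
      have hbvs : ∀ u ∈ vs, 1 ≤ u ∧ u ≤ m := by
        intro u hu
        exact ⟨(hb u (by rw [husdec]; simp [hu])).1, by have := hlt u hu; omega⟩
      obtain ⟨C', hC', heq⟩ := ih (by omega) vs hsortvs hbvs
      refine ⟨C'.map (· + 1), ?_, ?_⟩
      · intro c hc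
        rw [List.mem_map] at hc
        obtain ⟨c', hc', rfl⟩ := hc
        have := hC' c' hc'
        omega
      · rw [DeltaPart_succ, heq, husdec, Dstair_append]
        simp only [Dstair, mul_one]
        rw [mul_assoc, mul_assoc, push_through hm C' hC']
    · have hb' : ∀ u ∈ us, 1 ≤ u ∧ u ≤ m := by
        intro u hu
        have := hb u hu
        have : u ≠ m + 1 := by rintro rfl; exact hmem hu
        omega
      obtain ⟨C', hC', heq⟩ := ih (by omega) us hsort (by tauto)
      refine ⟨C' ++ (List.range (m+1)).map (fun k => m + 1 - k), ?_, ?_⟩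
      · intro c hc
        rw [List.mem_append] at hc
        rcases hc with hc | hc
        · have := hC' c hc; omega
        · rw [List.mem_map] at hc
          obtain ⟨k, hk, rfl⟩ := hc
          rw [List.mem_range] at hk
          omega
      · have hT : (((List.range (m+1)).map (fun k => m + 1 - k)).map (σ n)).prod
            = sigmaBr n (m+2) 1 := by
          unfold sigmaBr
          rw [List.map_map, show m + 2 - 1 = m + 1 from rfl]
          exact congrArg List.prod (List.map_congr_left (fun a ha => rfl))
        rw [DeltaPart_succ, heq, List.map_append, List.prod_append, hT, mul_assoc]

lemma Dstair_simple {us : List ℕ} (hsort : us.Pairwise (· < ·))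
    (hb : ∀ u ∈ us, 1 ≤ u ∧ u ≤ n - 1) : IsSimpleElt (Dstair n us) := by
  obtain ⟨C, hC, heq⟩ := stair_complement (n - 1) le_rfl us hsort hb
  constructor
  · exact Dstair_mem_pos hb
  · rw [← DeltaPart_eq_halfTwist, heq, ← mul_assoc, inv_mul_cancel, one_mul]
    exact prod_map_mem_pos (fun k hk => by have := hC k hk; omega)

end Braid
namespace Braid

variable {n : ℕ}

lemma expSum_sigma {k : ℕ} (h1 : 1 ≤ k) (h2 : k ≤ n - 1) :
    expSumHom n (σ n k) = Multiplicative.ofAdd (1 : ℤ) := by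
  rw [sigma_def h1 h2]
  exact PresentedGroup.toGroup.of _

lemma expSum_prod {L : List ℕ} (h : ∀ k ∈ L, 1 ≤ k ∧ k ≤ n - 1) :
    expSumHom n ((L.map (σ n)).prod) = Multiplicative.ofAdd (L.length : ℤ) := by
  induction L with
  | nil => simp
  | cons k L ih =>
    simp only [List.map_cons, List.prod_cons, map_mul,
      expSum_sigma (h k (by simp)).1 (h k (by simp)).2, ih (fun v hv => h v (by simp [hv]))]
    rw [← ofAdd_add]
    congr 1
    simp
    ring

lemma perm_sigma {k : ℕ} (h1 : 1 ≤ k) (h2 : k ≤ n - 1) :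
    permHom n (σ n k) = Equiv.swap k (k + 1) := by
  rw [sigma_def h1 h2]
  rw [permHom, PresentedGroup.toGroup.of]
  show Equiv.swap (k - 1 + 1) (k - 1 + 2) = Equiv.swap k (k + 1)
  congr 1 <;> omega

lemma perm_sigmaBr (v : ℕ) : ∀ x : ℕ, v ≤ n - 1 →
    permHom n (sigmaBr n (v+1) 1) x = if x = 1 then v + 1 else if x ≤ v + 1 then x - 1 else x := by
  induction v with
  | zero =>
    intro x hv
    rw [sigmaBr_nil le_rfl]
    simp only [map_one, Equiv.Perm.coe_one, id_eq]
    split_ifs <;> omega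
  | succ v ih =>
    intro x hv
    rw [sigmaBr_cons (by omega), map_mul]
    have hx := ih x (by omega)
    simp only [Equiv.Perm.mul_apply, hx, perm_sigma (by omega : 1 ≤ v + 1) hv]
    by_cases h1 : x = 1
    · subst h1
      simp only [if_pos rfl, Equiv.swap_apply_def]
      split_ifs <;> omega
    · rw [if_neg h1]
      by_cases h2 : x ≤ v + 1
      · rw [if_pos h2, if_neg h1, if_pos (by omega), Equiv.swap_apply_def]
        split_ifs <;> omega
      · rw [if_neg h2]
        by_cases h3 : x ≤ v + 2
        · rw [if_pos h3, Equiv.swap_apply_def]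
          split_ifs <;> omega
        · rw [if_neg h3, Equiv.swap_apply_def]
          split_ifs <;> omega

lemma perm_delta (hn : 2 ≤ n) (x : ℕ) :
    permHom n (braidDelta n) x = if x = 1 then n else if x ≤ n then x - 1 else x := by
  have h := perm_sigmaBr (n := n) (n - 1) x le_rfl
  rw [show n - 1 + 1 = n by omega] at h
  exact h

lemma perm_delta_pow (hn : 2 ≤ n) : ∀ i, i ≤ n - 1 →
    ((permHom n (braidDelta n)) ^ i) n = n - i := by
  intro i
  induction i with
  | zero => simp
  | succ i ih =>
    intro hi
    rw [pow_succ', Equiv.Perm.mul_apply, ih (by omega), perm_delta hn]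
    split_ifs <;> omega

/-- Block-preservation for words avoiding a letter `k₀`. -/
lemma perm_blocks (hn : 2 ≤ n) {L : List ℕ} (hL : ∀ k ∈ L, 1 ≤ k ∧ k ≤ n - 1) (k₀ : ℕ)
    (hk₀ : k₀ ∉ L) (x : ℕ) :
    (permHom n ((L.map (σ n)).prod) x ≤ k₀ ↔ x ≤ k₀) ∧
    (permHom n ((L.map (σ n)).prod) x ≤ n ↔ x ≤ n) ∧
    (1 ≤ permHom n ((L.map (σ n)).prod) x ↔ 1 ≤ x) ∧
    (¬(1 ≤ x ∧ x ≤ n) → permHom n ((L.map (σ n)).prod) x = x) := by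
  induction L generalizing x with
  | nil => simp
  | cons j L ih =>
    have hj := hL j (by simp)
    have hjk : j ≠ k₀ := by rintro rfl; exact hk₀ (by simp)
    simp only [List.map_cons, List.prod_cons, map_mul, Equiv.Perm.mul_apply,
      perm_sigma hj.1 hj.2]
    have ihx := ih (fun v hv => hL v (by simp [hv])) (fun h => hk₀ (List.mem_cons_of_mem _ h)) x
    set y := permHom n ((L.map (σ n)).prod) x with hy
    have hswap : ∀ z : ℕ, (Equiv.swap j (j+1) z ≤ k₀ ↔ z ≤ k₀) ∧
        (Equiv.swap j (j+1) z ≤ n ↔ z ≤ n) ∧ (1 ≤ Equiv.swap j (j+1) z ↔ 1 ≤ z) ∧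
        (¬(1 ≤ z ∧ z ≤ n) → Equiv.swap j (j+1) z = z) := by
      intro z
      simp only [Equiv.swap_apply_def]
      split_ifs <;> omega
    refine ⟨?_, ?_, ?_, ?_⟩
    · rw [(hswap y).1]; exact ihx.1
    · rw [(hswap y).2.1]; exact ihx.2.1
    · rw [(hswap y).2.2.1]; exact ihx.2.2.1
    · intro hx
      rw [ihx.2.2.2 hx]
      have : ¬(1 ≤ x ∧ x ≤ n) := hx
      exact (hswap x).2.2.2 hx

end Braid
namespace Braid

variable {n : ℕ}

lemma exists_word {s : BraidGroup n} (h : s ∈ positiveMonoid n) :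
    ∃ L : List ℕ, (∀ k ∈ L, 1 ≤ k ∧ k ≤ n - 1) ∧ s = (L.map (σ n)).prod := by
  induction h using Submonoid.closure_induction with
  | mem x hx =>
    obtain ⟨k, h1, h2, rfl⟩ := hx
    exact ⟨[k], by simp [h1, h2], by simp⟩
  | one => exact ⟨[], by simp, by simp⟩
  | mul x y _ _ ihx ihy =>
    obtain ⟨L1, hL1, rfl⟩ := ihx
    obtain ⟨L2, hL2, rfl⟩ := ihy
    refine ⟨L1 ++ L2, ?_, by simp⟩
    intro k hk
    rw [List.mem_append] at hk
    rcases hk with h | h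
    exacts [hL1 k h, hL2 k h]

lemma delta_word :
    braidDelta n = ((((List.range (n-1)).map (fun k => n - 1 - k))).map (σ n)).prod := by
  unfold braidDelta sigmaBr
  rw [List.map_map]
  rfl

lemma word_length (hn : 2 ≤ n) {L : List ℕ} (hL : ∀ k ∈ L, 1 ≤ k ∧ k ≤ n - 1)
    (hconj : IsConj ((L.map (σ n)).prod) (braidDelta n)) : L.length = n - 1 := by
  obtain ⟨c, hc⟩ := isConj_iff.mp hconj
  have h1 := congrArg (expSumHom n) hc
  simp only [map_mul, map_inv] at h1
  rw [mul_comm, ← mul_assoc, inv_mul_cancel, one_mul] at h1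
  rw [expSum_prod hL, delta_word, expSum_prod ?_] at h1
  · have := Multiplicative.ofAdd.injective h1
    simp at this
    omega
  · intro k hk
    simp only [List.mem_map, List.mem_range] at hk
    obtain ⟨t, ht, rfl⟩ := hk
    omega

lemma all_present (hn : 2 ≤ n) {L : List ℕ} (hL : ∀ k ∈ L, 1 ≤ k ∧ k ≤ n - 1)
    (hconj : IsConj ((L.map (σ n)).prod) (braidDelta n)) :
    ∀ k₀, 1 ≤ k₀ → k₀ ≤ n - 1 → k₀ ∈ L := by
  intro k₀ hk1 hk2
  by_contra hk₀
  obtain ⟨c, hc⟩ := isConj_iff.mp hconj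
  set f := permHom n ((L.map (σ n)).prod) with hf
  set g := permHom n c with hg
  have hfc : f = g⁻¹ * permHom n (braidDelta n) * (g⁻¹)⁻¹ := by
    rw [hf, ← hc]
    simp only [map_mul, map_inv, inv_inv, hg]
    group
  set y : ℕ → ℕ := fun i => g⁻¹ (n - i) with hy
  have claim1 : ∀ i, i ≤ n - 1 → (f ^ i) (y 0) = y i := by
    intro i hi
    rw [hfc, conj_pow]
    simp only [hy, Equiv.Perm.mul_apply]
    rw [show ((g⁻¹)⁻¹ : Equiv.Perm ℕ) (g⁻¹ (n - 0)) = n - 0 by simp]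
    rw [show (n : ℕ) - 0 = n by omega, perm_delta_pow hn i hi]
  have hinj : ∀ i j, i ≤ n - 1 → j ≤ n - 1 → y i = y j → i = j := by
    intro i j hi hj h
    have := (g⁻¹ : Equiv.Perm ℕ).injective h
    omega
  have blocks := perm_blocks hn hL k₀ hk₀
  simp only [← hf] at blocks
  have hstep : ∀ i, i ≤ n - 2 → y (i + 1) = f (y i) := by
    intro i hi
    rw [← claim1 (i+1) (by omega), pow_succ', Equiv.Perm.mul_apply, claim1 i (by omega)]
  by_cases h0 : 1 ≤ y 0 ∧ y 0 ≤ n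
  · -- y 0 in [1, n]; two block cases
    have key : ∀ (P : ℕ → Prop), (∀ x, (P (f x) ↔ P x)) → P (y 0) →
        ∀ i, i ≤ n - 1 → P (y i) := by
      intro P hP h0 i
      induction i with
      | zero => intro _; exact h0
      | succ i ih =>
        intro hi
        rw [hstep i (by omega)]
        exact (hP _).mpr (ih (by omega))
    by_cases hcase : y 0 ≤ k₀
    · have hall : ∀ i, i ≤ n - 1 → 1 ≤ y i ∧ y i ≤ k₀ := by
        apply key (fun x => 1 ≤ x ∧ x ≤ k₀)
        · intro x
          have := blocks x
          constructor
          · rintro ⟨a, b⟩; exact ⟨this.2.2.1.mp a, this.1.mp b⟩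
          · rintro ⟨a, b⟩; exact ⟨this.2.2.1.mpr a, this.1.mpr b⟩
        · exact ⟨h0.1, hcase⟩
      have hcard := Finset.card_le_card_of_injOn (s := Finset.range n)
        (t := Finset.Icc 1 k₀) (fun i => y i)
        (fun i hi => by
          rw [Finset.mem_coe, Finset.mem_range] at hi
          have := hall i (by omega)
          exact Finset.mem_Icc.mpr this)
        (fun i hi j hj h => by
          rw [Finset.mem_coe, Finset.mem_range] at hi hj
          exact hinj i j (by omega) (by omega) h)
      rw [Finset.card_range, Nat.card_Icc] at hcard
      omega
    · have hall : ∀ i, i ≤ n - 1 → k₀ + 1 ≤ y i ∧ y i ≤ n := by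
        apply key (fun x => k₀ + 1 ≤ x ∧ x ≤ n)
        · intro x
          have := blocks x
          constructor
          · rintro ⟨a, b⟩
            constructor
            · by_contra hcon
              have : f x ≤ k₀ := this.1.mpr (by omega)
              omega
            · exact this.2.1.mp b
          · rintro ⟨a, b⟩
            constructor
            · by_contra hcon
              have : x ≤ k₀ := this.1.mp (by omega)
              omega
            · exact this.2.1.mpr b
        · exact ⟨by omega, h0.2⟩
      have hcard := Finset.card_le_card_of_injOn (s := Finset.range n)
        (t := Finset.Icc (k₀+1) n) (fun i => y i)
        (fun i hi => by
          rw [Finset.mem_coe, Finset.mem_range] at hi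
          have := hall i (by omega)
          exact Finset.mem_Icc.mpr this)
        (fun i hi j hj h => by
          rw [Finset.mem_coe, Finset.mem_range] at hi hj
          exact hinj i j (by omega) (by omega) h)
      rw [Finset.card_range, Nat.card_Icc] at hcard
      omega
  · have : y 1 = y 0 := by
      rw [hstep 0 (by omega), (blocks (y 0)).2.2.2 h0]
    exact absurd (hinj 1 0 (by omega) (by omega) this) (by omega)

lemma word_nodup (hn : 2 ≤ n) {L : List ℕ} (hlen : L.length = n - 1)
    (hL : ∀ k ∈ L, 1 ≤ k ∧ k ≤ n - 1) (hall : ∀ k, 1 ≤ k → k ≤ n - 1 → k ∈ L) :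
    L.Nodup := by
  have hsub : Finset.Icc 1 (n-1) ⊆ L.toFinset := by
    intro k hk
    rw [Finset.mem_Icc] at hk
    exact List.mem_toFinset.mpr (hall k hk.1 hk.2)
  have h1 : n - 1 ≤ L.toFinset.card := by
    have := Finset.card_le_card hsub
    rwa [Nat.card_Icc, show n - 1 + 1 - 1 = n - 1 by omega] at this
  have h2 : L.toFinset.card = L.dedup.length := List.card_toFinset L
  have h3 : L.dedup.Sublist L := List.dedup_sublist L
  have h4 : L.dedup.length ≤ L.length := h3.length_le
  have h5 : L.dedup = L := h3.eq_of_length (by omega)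
  rw [← h5]
  exact List.nodup_dedup L

end Braid
namespace Braid

variable {n : ℕ}

/-- The list of "up" edges of a word: `i` with `σ_i` occurring before `σ_{i+1}`. -/
def upList (n : ℕ) (l : List ℕ) : List ℕ :=
  (List.range' 1 (n-2)).filter (fun i => decide (l.idxOf i < l.idxOf (i+1)))

lemma upList_sorted (l : List ℕ) : (upList n l).Pairwise (· < ·) :=
  List.Pairwise.filter _ (List.pairwise_lt_range' (s := 1) (n := n-2))

lemma mem_upList {l : List ℕ} {i : ℕ} :
    i ∈ upList n l ↔ (1 ≤ i ∧ i ≤ n - 2) ∧ l.idxOf i < l.idxOf (i+1) := by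
  simp only [upList, List.mem_filter, List.mem_range'_1, decide_eq_true_eq]
  omega

lemma nodup_idx_inj {l : List ℕ} (hnd : l.Nodup) {q : ℕ} (hq : q < l.length) :
    l.idxOf l[q] = q := by
  have := List.get_idxOf hnd ⟨q, hq⟩
  simpa using this

lemma all_down (hn : 2 ≤ n) {l : List ℕ} (hlen : l.length = n - 1)
    (hval : ∀ k ∈ l, 1 ≤ k ∧ k ≤ n - 1) (hall : ∀ k, 1 ≤ k → k ≤ n - 1 → k ∈ l)
    (hnd : l.Nodup) (hdown : upList n l = []) :
    ((l.map (σ n)).prod) = braidDelta n := by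
  have hA : ∀ i, 1 ≤ i → i ≤ n - 2 → l.idxOf (i+1) < l.idxOf i := by
    intro i h1 h2
    have hni : i ∉ upList n l := by rw [hdown]; simp
    rw [mem_upList] at hni
    have hne : l.idxOf i ≠ l.idxOf (i+1) := by
      intro h
      have := (List.idxOf_inj (hall i h1 (by omega))).mp h
      omega
    omega
  -- indexOf k = n - 1 - k for all k in [1, n-1]
  have hB : ∀ d, d ≤ n - 2 → d ≤ l.idxOf (n - 1 - d) := by
    intro d
    induction d with
    | zero => omega
    | succ d ihd =>
      intro hd
      have h1 := ihd (by omega)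
      have h2 := hA (n - 1 - (d+1)) (by omega) (by omega)
      rw [show n - 1 - (d+1) + 1 = n - 1 - d by omega] at h2
      omega
  have hC : ∀ e, e ≤ n - 2 → l.idxOf (e + 1) ≤ n - 2 - e := by
    intro e
    induction e with
    | zero =>
      intro _
      have h := List.idxOf_lt_length_iff.mpr (hall 1 le_rfl (by omega))
      simp only [Nat.zero_add]
      omega
    | succ e ihe =>
      intro he
      have h1 := ihe (by omega)
      have h2 := hA (e+1) (by omega) (by omega)
      omega
  have hidx : ∀ k, 1 ≤ k → k ≤ n - 1 → l.idxOf k = n - 1 - k := by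
    intro k h1 h2
    have hb := hB (n - 1 - k) (by omega)
    rw [show n - 1 - (n - 1 - k) = k by omega] at hb
    have hc := hC (k - 1) (by omega)
    rw [show k - 1 + 1 = k by omega] at hc
    omega
  have hl : l = (List.range (n-1)).map (fun k => n - 1 - k) := by
    apply List.ext_getElem
    · simp [hlen]
    · intro p hp hp'
      have hpn : p < n - 1 := by rwa [hlen] at hp
      have hk := hval l[p] (List.getElem_mem hp)
      have := hidx l[p] hk.1 hk.2
      rw [nodup_idx_inj hnd hp] at this
      simp only [List.getElem_map, List.getElem_range]
      omega
  rw [hl, delta_word]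

end Braid
namespace Braid

variable {n : ℕ}

lemma key (hn : 2 ≤ n) : ∀ (μ : ℕ) (l : List ℕ), (upList n l).sum = μ →
    l.length = n - 1 → (∀ k ∈ l, 1 ≤ k ∧ k ≤ n - 1) → (∀ k, 1 ≤ k → k ≤ n - 1 → k ∈ l) →
    l.Nodup →
    (Dstair n (upList n l))⁻¹ * ((l.map (σ n)).prod) * Dstair n (upList n l) = braidDelta n := by
  intro μ
  induction μ using Nat.strong_induction_on with
  | _ μ ih =>
  intro l hsum hlen hval hall hnd
  rcases hupl : upList n l with _ | ⟨i, rest⟩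
  · simp only [Dstair, inv_one, one_mul, mul_one]
    exact all_down hn hlen hval hall hnd hupl
  · have hiU : i ∈ upList n l := by rw [hupl]; exact List.mem_cons_self
    obtain ⟨⟨hi1, hi2⟩, hup⟩ := mem_upList.mp hiU
    have hmin : ∀ j, 1 ≤ j → j < i → ¬(l.idxOf j < l.idxOf (j+1)) := by
      intro j h1 h2 hP
      have hj : j ∈ upList n l := mem_upList.mpr ⟨⟨h1, by omega⟩, hP⟩
      rw [hupl, List.mem_cons] at hj
      rcases hj with h | h
      · omega
      · have hsort := upList_sorted (n := n) l
        rw [hupl] at hsort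
        have := (List.pairwise_cons.mp hsort).1 j h
        omega
    have hil : i ∈ l := hall i hi1 (by omega)
    have hi1l : (i+1) ∈ l := hall (i+1) (by omega) (by omega)
    set p := l.idxOf i with hp
    have hplen : p < l.length := List.idxOf_lt_length_iff.mpr hil
    set a := l.take p with ha
    set b := l.drop (p+1) with hb
    have hdropp : l.drop p = i :: b := by
      rw [List.drop_eq_getElem_cons hplen]
      congr 1
      exact List.getElem_idxOf hplen
    have hdecomp : l = a ++ i :: b := by
      conv_lhs => rw [← List.take_append_drop p l]
      rw [hdropp]
    have halen : a.length = p := by rw [ha, List.length_take]; omega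
    have hnd' : (a ++ i :: b).Nodup := hdecomp ▸ hnd
    rw [List.nodup_append] at hnd'
    have hia : i ∉ a := fun h => hnd'.2.2 _ h _ List.mem_cons_self rfl
    have hnep : ∀ j ∈ l, j ≠ i → l.idxOf j ≠ p := by
      intro j hj hji h
      rw [hp] at h
      exact hji ((List.idxOf_inj hj).mp h)
    have hidxa : ∀ j ∈ a, l.idxOf j < p := by
      intro j hj
      rw [List.mem_iff_getElem] at hj
      obtain ⟨q, hq, rfl⟩ := hj
      have hq' : q < p := by rw [halen] at hq; exact hq
      have hget : a[q] = l[q]'(by omega) := List.getElem_take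
      rw [hget, nodup_idx_inj hnd (by omega)]
      exact hq'
    have hi1a : (i+1) ∉ a := fun h => by have := hidxa _ h; omega
    have him1a : 2 ≤ i → (i-1) ∉ a := by
      intro hi2' h
      have h1 := hidxa _ h
      have h2 := hmin (i-1) (by omega) (by omega)
      rw [show i - 1 + 1 = i by omega] at h2
      omega
    have hacomm : ∀ j ∈ a, 1 ≤ j ∧ j ≤ n - 1 ∧ (i + 2 ≤ j ∨ j + 2 ≤ i) := by
      intro j hj
      have hjl : j ∈ l := by rw [hdecomp]; exact List.mem_append_left _ hj
      have hv := hval j hjl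
      have hji : j ≠ i := fun h => hia (h ▸ hj)
      have hji1 : j ≠ i + 1 := fun h => hi1a (h ▸ hj)
      have hjim1 : i < 2 ∨ j ≠ i - 1 := by
        by_cases h2 : 2 ≤ i
        · exact Or.inr (fun h => him1a h2 (h ▸ hj))
        · exact Or.inl (by omega)
      exact ⟨hv.1, hv.2, by omega⟩
    set l₂ : List ℕ := (a ++ b) ++ [i] with hl₂
    have hperm : l₂.Perm l := by
      rw [hdecomp]
      exact (List.perm_append_singleton _ _).trans List.perm_middle.symm
    have hlen₂ : l₂.length = n - 1 := by rw [hperm.length_eq, hlen]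
    have hval₂ : ∀ k ∈ l₂, 1 ≤ k ∧ k ≤ n - 1 := fun k hk => hval k (hperm.mem_iff.mp hk)
    have hall₂ : ∀ k, 1 ≤ k → k ≤ n - 1 → k ∈ l₂ := fun k h1 h2 => hperm.mem_iff.mpr (hall k h1 h2)
    have hnd₂ : l₂.Nodup := hperm.nodup_iff.mpr hnd
    have hib : i ∉ b := (List.nodup_cons.mp hnd'.2.1).1
    have hiab : i ∉ a ++ b := by
      rw [List.mem_append]
      rintro (h | h)
      · exact hia h
      · exact hib h
    have hlenab : (a ++ b).length = n - 2 := by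
      have h := hlen₂
      rw [hl₂, List.length_append, List.length_singleton] at h
      omega
    have hidxi₂ : l₂.idxOf i = n - 2 := by
      rw [hl₂, List.idxOf_append_of_notMem hiab, List.idxOf_cons_self, hlenab]
      omega
    have hidx₂ : ∀ j ∈ l, j ≠ i →
        l₂.idxOf j = if l.idxOf j < p then l.idxOf j else l.idxOf j - 1 := by
      intro j hj hji
      have hjl' : j ∈ a ++ i :: b := by rw [← hdecomp]; exact hj
      rcases List.mem_append.mp hjl' with hja | hjib
      · have h1 : l.idxOf j = a.idxOf j := by
          conv_lhs => rw [hdecomp]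
          rw [List.idxOf_append_of_mem hja]
        have h2 : l₂.idxOf j = a.idxOf j := by
          rw [hl₂, List.idxOf_append_of_mem (List.mem_append.mpr (Or.inl hja)),
            List.idxOf_append_of_mem hja]
        have h3 := hidxa j hja
        rw [h2, if_pos h3, h1]
      · have hjb : j ∈ b := by
          rcases List.mem_cons.mp hjib with h | h
          · exact absurd h hji
          · exact h
        have hjna : j ∉ a := fun h => hnd'.2.2 _ h _ (List.mem_cons.mpr (Or.inr hjb)) rfl
        have h1 : l.idxOf j = p + 1 + b.idxOf j := by
          conv_lhs => rw [hdecomp]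
          rw [List.idxOf_append_of_notMem hjna, List.idxOf_cons_ne _ (Ne.symm hji), halen]
          omega
        have h2 : l₂.idxOf j = p + b.idxOf j := by
          rw [hl₂, List.idxOf_append_of_mem (List.mem_append.mpr (Or.inr hjb)),
            List.idxOf_append_of_notMem hjna, halen]
        rw [h2, if_neg (by omega)]
        omega
    have hidx₂lt : ∀ j ∈ l, j ≠ i → l₂.idxOf j < n - 2 := by
      intro j hj hji
      have h0 : l.idxOf j < n - 1 := by
        have := List.idxOf_lt_length_iff.mpr hj
        omega
      have hne := hnep j hj hji
      rw [hidx₂ j hj hji]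
      split_ifs with h
      · omega
      · omega
    have hP₂ : ∀ j, 1 ≤ j → j ≤ n - 2 → j ≠ i → j + 1 ≠ i →
        ((l₂.idxOf j < l₂.idxOf (j+1)) ↔ (l.idxOf j < l.idxOf (j+1))) := by
      intro j h1 h2 hji hj1i
      have hjl : j ∈ l := hall j h1 (by omega)
      have hj1l : (j+1) ∈ l := hall (j+1) (by omega) (by omega)
      have e1 := hidx₂ j hjl hji
      have e2 := hidx₂ (j+1) hj1l hj1i
      have hne1 := hnep j hjl hji
      have hne2 := hnep (j+1) hj1l hj1i
      rw [e1, e2]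
      split_ifs <;> omega
    have hP₂i : ¬(l₂.idxOf i < l₂.idxOf (i+1)) := by
      have := hidx₂lt (i+1) hi1l (by omega)
      rw [hidxi₂]
      omega
    have hP₂im1 : 2 ≤ i → (l₂.idxOf (i-1) < l₂.idxOf i) := by
      intro hi2'
      have him1l : (i-1) ∈ l := hall (i-1) (by omega) (by omega)
      have := hidx₂lt (i-1) him1l (by omega)
      rw [hidxi₂]
      omega
    -- compute upList n l₂
    have hR2' : rest = (List.range' (i+1) (n-2-i)).filter
        (fun j => decide (l.idxOf j < l.idxOf (j+1))) := by
      have hn3 : 3 ≤ n := by omega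
      have hsplit1 : List.range' 1 (i-1) ++ List.range' i (n-1-i) = List.range' 1 (n-2) := by
        have h := List.range'_append (s := 1) (m := i-1) (n := n-1-i) (step := 1)
        rw [show 1 + 1*(i-1) = i by omega, show (i-1) + (n-1-i) = n-2 by omega] at h
        exact h
      have hsplit2 : List.range' i (n-1-i) = i :: List.range' (i+1) (n-2-i) := by
        have h := List.range'_succ (s := i) (n := n-2-i) (step := 1)
        rw [show (n-2-i) + 1 = n-1-i by omega] at h
        exact h
      have hfilter1 : (List.range' 1 (i-1)).filter
          (fun j => decide (l.idxOf j < l.idxOf (j+1))) = [] := by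
        rw [List.filter_eq_nil_iff]
        intro j hj
        rw [List.mem_range'_1] at hj
        simp only [decide_eq_true_eq]
        exact hmin j hj.1 (by omega)
      have := hupl
      rw [upList, ← hsplit1, List.filter_append, hfilter1, List.nil_append, hsplit2,
        List.filter_cons, if_pos (by simp only [decide_eq_true_eq]; exact hup)] at this
      exact (List.cons.injEq _ _ _ _ ▸ this).2.symm
    have hupl₂ : upList n l₂ = (if 2 ≤ i then [i-1] else []) ++ rest := by
      have hrest2 : (List.range' (i+1) (n-2-i)).filter
          (fun j => decide (l₂.idxOf j < l₂.idxOf (j+1))) = rest := by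
        rw [hR2']
        apply List.filter_congr
        intro j hj
        rw [List.mem_range'_1] at hj
        simp only [decide_eq_decide]
        exact hP₂ j (by omega) (by omega) (by omega) (by omega)
      by_cases hi2' : 2 ≤ i
      · rw [if_pos hi2']
        have hsplit1 : List.range' 1 (i-1) ++ List.range' i (n-1-i) = List.range' 1 (n-2) := by
          have h := List.range'_append (s := 1) (m := i-1) (n := n-1-i) (step := 1)
          rw [show 1 + 1*(i-1) = i by omega, show (i-1) + (n-1-i) = n-2 by omega] at h
          exact h
        have hsplit2 : List.range' i (n-1-i) = i :: List.range' (i+1) (n-2-i) := by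
          have h := List.range'_succ (s := i) (n := n-2-i) (step := 1)
          rw [show (n-2-i) + 1 = n-1-i by omega] at h
          exact h
        have hsplit3 : List.range' 1 (i-2) ++ [i-1] = List.range' 1 (i-1) := by
          have h := List.range'_1_concat (s := 1) (n := i-2)
          rw [show 1 + (i-2) = i-1 by omega] at h
          exact h.symm.trans (by rw [show (i-2)+1 = i-1 by omega])
        have hfil1 : (List.range' 1 (i-2)).filter
            (fun j => decide (l₂.idxOf j < l₂.idxOf (j+1))) = [] := by
          rw [List.filter_eq_nil_iff]
          intro j hj
          rw [List.mem_range'_1] at hj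
          simp only [decide_eq_true_eq]
          rw [hP₂ j (by omega) (by omega) (by omega) (by omega)]
          exact hmin j (by omega) (by omega)
        have hfilm1 : [i-1].filter (fun j => decide (l₂.idxOf j < l₂.idxOf (j+1)))
            = [i-1] := by
          rw [List.filter_cons, if_pos ?_, List.filter_nil]
          simp only [decide_eq_true_eq]
          rw [show i-1+1 = i by omega]
          exact hP₂im1 hi2'
        have hfili : ((i :: List.range' (i+1) (n-2-i)).filter
            (fun j => decide (l₂.idxOf j < l₂.idxOf (j+1)))) = rest := by
          rw [List.filter_cons, if_neg (by simp only [decide_eq_true_eq]; exact hP₂i), hrest2]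
        rw [upList, ← hsplit1, ← hsplit3, hsplit2, List.append_assoc, List.filter_append,
          hfil1, List.nil_append, List.filter_append, hfilm1, hfili]
      · rw [if_neg hi2']
        obtain rfl : i = 1 := by omega
        have hsplit : List.range' 1 (n-2) = 1 :: List.range' 2 (n-3) := by
          have h := List.range'_succ (s := 1) (n := n-3) (step := 1)
          rw [show (n-3) + 1 = n-2 by omega] at h
          exact h
        rw [upList, hsplit, List.filter_cons,
          if_neg (by simp only [decide_eq_true_eq]; exact hP₂i), List.nil_append]
        rw [show (2:ℕ) = 1 + 1 from rfl, show n - 3 = n - 2 - 1 by omega]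
        exact hrest2
    -- sum decreases
    have hsum₂ : (upList n l₂).sum < μ := by
      have h1 : (upList n l).sum = i + rest.sum := by rw [hupl]; simp
      rw [hupl₂]
      by_cases hi2' : 2 ≤ i
      · rw [if_pos hi2']
        simp only [List.sum_append, List.sum_cons, List.sum_nil]
        omega
      · rw [if_neg hi2']
        simp only [List.nil_append]
        omega
    have eq₂ := ih _ hsum₂ l₂ rfl hlen₂ hval₂ hall₂ hnd₂
    -- product manipulations
    have hcomm : Commute (σ n i) ((a.map (σ n)).prod) := by
      apply Commute.list_prod_right
      intro y hy
      rw [List.mem_map] at hy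
      obtain ⟨j, hj, rfl⟩ := hy
      have hc := hacomm j hj
      exact sigma_commute hi1 (by omega) hc.1 (by omega)
    have hprodl : (l.map (σ n)).prod = σ n i * ((a++b).map (σ n)).prod := by
      conv_lhs => rw [hdecomp]
      rw [List.map_append, List.prod_append, List.map_cons, List.prod_cons,
        List.map_append, List.prod_append, ← mul_assoc, ← mul_assoc, ← hcomm.eq]
    have hprodl₂ : (l₂.map (σ n)).prod = ((a++b).map (σ n)).prod * σ n i := by
      rw [hl₂, List.map_append, List.prod_append]
      simp
    have hD : Dstair n (i :: rest) = σ n i * Dstair n (upList n l₂) := by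
      rw [hupl₂]
      by_cases hi2' : 2 ≤ i
      · rw [if_pos hi2']
        show Dstair n (i :: rest) = σ n i * Dstair n ((i-1) :: rest)
        simp only [Dstair]
        rw [← mul_assoc]
        congr 1
        rw [show i-1+1 = i by omega]
        exact sigmaBr_cons (by omega)
      · rw [if_neg hi2']
        obtain rfl : i = 1 := by omega
        simp only [Dstair, List.nil_append]
        congr 1
        rw [sigmaBr_cons le_rfl, sigmaBr_nil le_rfl, mul_one]
    rw [hD]
    calc (σ n i * Dstair n (upList n l₂))⁻¹ * (l.map (σ n)).prod * (σ n i * Dstair n (upList n l₂))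
        = (Dstair n (upList n l₂))⁻¹ *
            ((σ n i)⁻¹ * (l.map (σ n)).prod * σ n i) * Dstair n (upList n l₂) := by group
      _ = (Dstair n (upList n l₂))⁻¹ * (l₂.map (σ n)).prod * Dstair n (upList n l₂) := by
          rw [hprodl, hprodl₂]; group
      _ = braidDelta n := eq₂

end Braid

/-- every simple conjugate of `δ` is conjugated to `δ` by a simple element. -/
theorem simple_conj_delta_by_simple (n : ℕ) (hn : 2 ≤ n) (s : Braid.BraidGroup n)
    (hs : Braid.IsSimpleElt s) (hconj : IsConj s (Braid.braidDelta n)) :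
    ∃ α : Braid.BraidGroup n, Braid.IsSimpleElt α ∧ α⁻¹ * s * α = Braid.braidDelta n := by
  obtain ⟨L, hLval, rfl⟩ := Braid.exists_word hs.1
  have hlen := Braid.word_length hn hLval hconj
  have hall := Braid.all_present hn hLval hconj
  have hnd := Braid.word_nodup hn hlen hLval hall
  refine ⟨Braid.Dstair n (Braid.upList n L), ?_, ?_⟩
  · apply Braid.Dstair_simple (Braid.upList_sorted L)
    intro u hu
    have := Braid.mem_upList.mp hu
    omega
  · exact Braid.key hn _ L rfl hlen hLval hall hnd
end

section
/- Let n ≥ 3 and let 1 ≤ u < v ≤ n−1. Then in B_{2n−2} one has θ′((s_{u+1}⁻¹ s_{u+2}⁻¹ ⋯ s_{v−1}⁻¹)(s_v s_{v−1} ⋯ s_{u+1})) = a_{v,u} · a_{v+n−1,u+n−1}, where the first factor is the empty product (identity) when v = u+1. -/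
namespace Braid

section Aux

variable {G : Type*} [Group G]

lemma mk_rel_eq_one {α : Type} {rels : Set (FreeGroup α)} {r : FreeGroup α} (h : r ∈ rels) :
    PresentedGroup.mk rels r = 1 :=
  (QuotientGroup.eq_one_iff r).mpr (Subgroup.subset_normalClosure h)

lemma prod_range_succ_left (f : ℕ → G) (N : ℕ) :
    ((List.range (N+1)).map f).prod = f 0 * ((List.range N).map (fun k => f (k+1))).prod := by
  rw [List.range_succ_eq_map, List.map_cons, List.prod_cons, List.map_map]
  rfl

lemma prod_range_succ_right (f : ℕ → G) (N : ℕ) :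
    ((List.range (N+1)).map f).prod = ((List.range N).map f).prod * f N := by
  rw [List.range_succ, List.map_append, List.prod_append, List.map_singleton,
    List.prod_singleton]

end Aux

lemma sigma_comm_s16 (m : ℕ) {i j : ℕ} (hij : i + 1 < j) : Commute (σ m i) (σ m j) := by
  by_cases hi : 1 ≤ i ∧ i ≤ m - 1
  · by_cases hj : 1 ≤ j ∧ j ≤ m - 1
    · rw [σ, σ, dif_pos hi, dif_pos hj]
      set a : Fin (m-1) := ⟨i - 1, by omega⟩
      set b : Fin (m-1) := ⟨j - 1, by omega⟩
      have hr : (FreeGroup.of a * FreeGroup.of b * (FreeGroup.of b * FreeGroup.of a)⁻¹)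
          ∈ braidRels (m-1) := Or.inl ⟨a, b, by simp [a, b]; omega, rfl⟩
      have h1 := mk_rel_eq_one hr
      rw [map_mul, map_mul, map_inv, mul_inv_eq_one] at h1
      exact h1
    · have : σ m j = 1 := by rw [σ, dif_neg hj]
      rw [this]; exact Commute.one_right _
  · have : σ m i = 1 := by rw [σ, dif_neg hi]
    rw [this]; exact Commute.one_left _

lemma sigma_braid_s16 (m i : ℕ) (h1 : 1 ≤ i) (h2 : i + 1 ≤ m - 1) :
    σ m i * σ m (i+1) * σ m i = σ m (i+1) * σ m i * σ m (i+1) := by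
  have hi : 1 ≤ i ∧ i ≤ m - 1 := ⟨h1, by omega⟩
  have hi1 : 1 ≤ i + 1 ∧ i + 1 ≤ m - 1 := ⟨by omega, h2⟩
  rw [σ, σ, dif_pos hi, dif_pos hi1]
  set a : Fin (m-1) := ⟨i - 1, by omega⟩
  set b : Fin (m-1) := ⟨i + 1 - 1, by omega⟩
  have hr : (FreeGroup.of a * FreeGroup.of b * FreeGroup.of a *
      (FreeGroup.of b * FreeGroup.of a * FreeGroup.of b)⁻¹) ∈ braidRels (m-1) :=
    Or.inr ⟨a, b, by simp [a, b]; omega, rfl⟩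
  have h1 := mk_rel_eq_one hr
  simp only [map_mul, map_inv, mul_inv_eq_one] at h1
  exact h1

lemma sigma_conj (m i : ℕ) (h1 : 1 ≤ i) (h2 : i + 1 ≤ m - 1) :
    σ m (i+1) * σ m i * (σ m (i+1))⁻¹ = (σ m i)⁻¹ * σ m (i+1) * σ m i := by
  apply mul_left_cancel (a := σ m i)
  calc σ m i * (σ m (i+1) * σ m i * (σ m (i+1))⁻¹)
      = (σ m i * σ m (i+1) * σ m i) * (σ m (i+1))⁻¹ := by group
    _ = (σ m (i+1) * σ m i * σ m (i+1)) * (σ m (i+1))⁻¹ := by rw [sigma_braid_s16 m i h1 h2]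
    _ = σ m (i+1) * σ m i := by group
    _ = σ m i * ((σ m i)⁻¹ * σ m (i+1) * σ m i) := by group

lemma sigmaBr_of_le (m : ℕ) {j i : ℕ} (h : j ≤ i) : sigmaBr m j i = 1 := by
  unfold sigmaBr
  rw [Nat.sub_eq_zero_of_le h]
  rfl

lemma sigmaBr_peel_left (m : ℕ) {j i : ℕ} (h : i < j) :
    sigmaBr m j i = σ m (j-1) * sigmaBr m (j-1) i := by
  unfold sigmaBr
  rw [show j - i = (j - 1 - i) + 1 from by omega, prod_range_succ_left, Nat.sub_zero]
  refine congrArg₂ (· * ·) rfl ?_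
  refine congrArg List.prod (List.map_congr_left fun k _ => ?_)
  congr 1
  omega

lemma sigmaBr_peel_right (m : ℕ) {j i : ℕ} (h : i < j) :
    sigmaBr m j i = sigmaBr m j (i+1) * σ m i := by
  unfold sigmaBr
  rw [show j - i = (j - (i+1)) + 1 from by omega, prod_range_succ_right]
  congr 2
  omega

lemma sigmaBr_single (m s : ℕ) : sigmaBr m (s+1) s = σ m s := by
  rw [sigmaBr_peel_right m (Nat.lt_succ_self s), sigmaBr_of_le m (le_refl (s+1)), one_mul]

lemma bandGen_succ (m s : ℕ) : bandGen m (s+1) s = σ m s := by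
  unfold bandGen
  rw [sigmaBr_of_le m (le_refl (s+1))]
  rw [one_mul, inv_one, mul_one]

lemma sigma_comm_sigmaBr (m t j i : ℕ) (hj : j ≤ t - 1) (ht : 2 ≤ t) :
    Commute (σ m t) (sigmaBr m j i) := by
  apply Commute.list_prod_right
  intro x hx
  simp only [List.mem_map, List.mem_range] at hx
  obtain ⟨k, hk, rfl⟩ := hx
  exact (sigma_comm_s16 m (show (j - 1 - k) + 1 < t from by omega)).symm

lemma prod_mul_split {G : Type*} [Group G] (f g : ℕ → G) (N : ℕ)
    (h : ∀ i j, i < N → j < N → Commute (g i) (f j)) :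
    ((List.range N).map (fun k => f k * g k)).prod
      = ((List.range N).map f).prod * ((List.range N).map g).prod := by
  induction N with
  | zero => simp
  | succ N ih =>
    rw [prod_range_succ_right, prod_range_succ_right f, prod_range_succ_right g,
      ih (fun i j hi hj => h i j (by omega) (by omega))]
    have hc : Commute (((List.range N).map g).prod) (f N) := by
      apply Commute.list_prod_left
      intro x hx
      simp only [List.mem_map, List.mem_range] at hx
      obtain ⟨k, hk, rfl⟩ := hx
      exact h k N (by omega) (by omega)
    exact hc.mul_mul_mul_comm _ _

lemma conj_step {G : Type*} [Group G] (A x y Z : G) (c1 : Commute x A) (c2 : Commute x Z)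
    (c3 : x * y * x⁻¹ = y⁻¹ * x * y) :
    x * (A * (y * Z)) * x⁻¹ = (A * y⁻¹) * (x * (y * Z)) := by
  calc x * (A * (y * Z)) * x⁻¹
      = A * ((x * y * x⁻¹) * Z) := by
        rw [← mul_assoc x A, c1.eq]
        rw [mul_assoc A (x) (y*Z), mul_assoc A (x*(y*Z)) x⁻¹]
        congr 1
        rw [← mul_assoc x y Z, mul_assoc (x*y) Z x⁻¹, (c2.symm.inv_right.eq),
          ← mul_assoc]
    _ = A * ((y⁻¹ * x * y) * Z) := by rw [c3]
    _ = (A * y⁻¹) * (x * (y * Z)) := by group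

lemma band_alt (m s : ℕ) (hs : 1 ≤ s) : ∀ d : ℕ, s + 1 + d ≤ m →
    ((List.range d).map (fun k => (σ m (s + k))⁻¹)).prod * sigmaBr m (s + 1 + d) s
      = bandGen m (s + 1 + d) s := by
  intro d
  induction d with
  | zero =>
    intro _
    simp only [List.range_zero, List.map_nil, List.prod_nil, one_mul, Nat.add_zero]
    rw [sigmaBr_single, bandGen_succ]
  | succ d ih =>
    intro hm
    have ih' := ih (by omega)
    rw [show s + 1 + d = s + d + 1 from by omega] at ih'
    rw [show s + 1 + (d + 1) = (s + d + 1) + 1 from by omega]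
    have hb : bandGen m (s + d + 1 + 1) s
        = σ m (s+d+1) * bandGen m (s+d+1) s * (σ m (s+d+1))⁻¹ := by
      unfold bandGen
      rw [sigmaBr_peel_left m (show s + 1 < s + d + 1 + 1 from by omega)]
      simp only [Nat.add_sub_cancel]
      rw [mul_inv_rev]
      group
    rw [hb, ← ih']
    have hpeel : sigmaBr m (s + d + 1) s = σ m (s+d) * sigmaBr m (s+d) s := by
      rw [sigmaBr_peel_left m (show s < s + d + 1 from by omega)]
      simp only [Nat.add_sub_cancel]
    have hpeel2 : sigmaBr m (s + d + 1 + 1) s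
        = σ m (s+d+1) * (σ m (s+d) * sigmaBr m (s+d) s) := by
      rw [sigmaBr_peel_left m (show s < s + d + 1 + 1 from by omega)]
      simp only [Nat.add_sub_cancel]
      rw [hpeel]
    rw [hpeel, hpeel2, prod_range_succ_right]
    have c1 : Commute (σ m (s+d+1)) (((List.range d).map (fun k => (σ m (s + k))⁻¹)).prod) := by
      apply Commute.list_prod_right
      intro x hx
      simp only [List.mem_map, List.mem_range] at hx
      obtain ⟨k, hk, rfl⟩ := hx
      exact ((sigma_comm_s16 m (show s + k + 1 < s + d + 1 from by omega)).symm).inv_right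
    have c2 : Commute (σ m (s+d+1)) (sigmaBr m (s+d) s) :=
      sigma_comm_sigmaBr m (s+d+1) (s+d) s (by omega) (by omega)
    have c3 : σ m (s+d+1) * σ m (s+d) * (σ m (s+d+1))⁻¹
        = (σ m (s+d))⁻¹ * σ m (s+d+1) * σ m (s+d) :=
      sigma_conj m (s+d) (by omega) (by omega)
    exact (conj_step _ _ _ _ c1 c2 c3).symm

end Braid


open Braid in
/-- for `1 ≤ u < v ≤ n-1`, one has
`θ'((s_{u+1}⁻¹⋯s_{v-1}⁻¹)(s_v s_{v-1}⋯s_{u+1})) = a_{v,u} a_{v+n-1,u+n-1}` in `B_{2n-2}`. -/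
theorem theta_of_partial_product (n : ℕ) (hn : 3 ≤ n) (u v : ℕ)
    (hu : 1 ≤ u) (huv : u < v) (hv : v ≤ n - 1)
    (θ' : Braid.ArtinTitsB (n - 1) →* Braid.BraidGroup (2 * n - 2))
    (hθ1 : θ' (Braid.sGen (n - 1) 1) = Braid.bandGen (2 * n - 2) n 1)
    (hθ2 : ∀ i, 2 ≤ i → i ≤ n - 1 →
      θ' (Braid.sGen (n - 1) i) =
        Braid.bandGen (2 * n - 2) i (i - 1) *
        Braid.bandGen (2 * n - 2) (i + n - 1) (i + n - 2)) :
    θ' (((List.range (v - 1 - u)).map (fun k => (Braid.sGen (n - 1) (u + 1 + k))⁻¹)).prod *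
        ((List.range (v - u)).map (fun k => Braid.sGen (n - 1) (v - k))).prod) =
      Braid.bandGen (2 * n - 2) v u * Braid.bandGen (2 * n - 2) (v + n - 1) (u + n - 1) := by
  rw [map_mul, map_list_prod, map_list_prod, List.map_map, List.map_map]
  have hL1 : (List.range (v-1-u)).map (θ' ∘ fun k => (sGen (n-1) (u+1+k))⁻¹)
      = (List.range (v-1-u)).map
          (fun k => (σ (2*n-2) (u+k))⁻¹ * (σ (2*n-2) (u+n-1+k))⁻¹) := by
    apply List.map_congr_left
    intro k hk
    simp only [List.mem_range] at hk
    show θ' ((sGen (n-1) (u+1+k))⁻¹) = _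
    rw [map_inv, hθ2 (u+1+k) (by omega) (by omega)]
    have e1 : bandGen (2*n-2) (u+1+k) (u+1+k-1) = σ (2*n-2) (u+k) := by
      rw [show u+1+k-1 = u+k from by omega, show u+1+k = (u+k)+1 from by omega, bandGen_succ]
    have e2 : bandGen (2*n-2) (u+1+k+n-1) (u+1+k+n-2) = σ (2*n-2) (u+n-1+k) := by
      rw [show u+1+k+n-2 = u+n-1+k from by omega, show u+1+k+n-1 = (u+n-1+k)+1 from by omega,
        bandGen_succ]
    rw [e1, e2, mul_inv_rev]
    exact ((sigma_comm_s16 (2*n-2) (show u+k+1 < u+n-1+k from by omega)).inv_inv).symm.eq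
  have hL2 : (List.range (v-u)).map (θ' ∘ fun k => sGen (n-1) (v-k))
      = (List.range (v-u)).map (fun k => σ (2*n-2) (v-1-k) * σ (2*n-2) (v+n-2-k)) := by
    apply List.map_congr_left
    intro k hk
    simp only [List.mem_range] at hk
    show θ' (sGen (n-1) (v-k)) = _
    rw [hθ2 (v-k) (by omega) (by omega)]
    have e1 : bandGen (2*n-2) (v-k) (v-k-1) = σ (2*n-2) (v-1-k) := by
      rw [show v-k-1 = v-1-k from by omega, show v-k = (v-1-k)+1 from by omega, bandGen_succ]
    have e2 : bandGen (2*n-2) (v-k+n-1) (v-k+n-2) = σ (2*n-2) (v+n-2-k) := by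
      rw [show v-k+n-2 = v+n-2-k from by omega, show v-k+n-1 = (v+n-2-k)+1 from by omega,
        bandGen_succ]
    rw [e1, e2]
  rw [hL1, hL2,
    prod_mul_split _ _ _ (fun i j hi hj =>
      ((sigma_comm_s16 (2*n-2) (show u+j+1 < u+n-1+i from by omega)).inv_inv).symm),
    prod_mul_split _ _ _ (fun i j hi hj =>
      (sigma_comm_s16 (2*n-2) (show v-1-j+1 < v+n-2-i from by omega)).symm)]
  have hc : Commute (((List.range (v-1-u)).map (fun k => (σ (2*n-2) (u+n-1+k))⁻¹)).prod)
      (((List.range (v-u)).map (fun k => σ (2*n-2) (v-1-k))).prod) := by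
    apply Commute.list_prod_left
    intro x hx
    simp only [List.mem_map, List.mem_range] at hx
    obtain ⟨a, ha, rfl⟩ := hx
    apply Commute.list_prod_right
    intro y hy
    simp only [List.mem_map, List.mem_range] at hy
    obtain ⟨b, hb, rfl⟩ := hy
    exact ((sigma_comm_s16 (2*n-2) (show v-1-b+1 < u+n-1+a from by omega)).symm).inv_left
  rw [hc.mul_mul_mul_comm]
  have hP2 : ((List.range (v-u)).map (fun k => σ (2*n-2) (v-1-k))).prod
      = sigmaBr (2*n-2) v u := rfl
  have hQ2 : ((List.range (v-u)).map (fun k => σ (2*n-2) (v+n-2-k))).prod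
      = sigmaBr (2*n-2) (v+n-1) (u+n-1) := by
    unfold sigmaBr
    rw [show v+n-1-(u+n-1) = v-u from by omega]
    refine congrArg List.prod (List.map_congr_left fun k _ => ?_)
    congr 1
  have hb1 := band_alt (2*n-2) u hu (v-u-1) (by omega)
  rw [show u+1+(v-u-1) = v from by omega, show v-u-1 = v-1-u from by omega] at hb1
  have hb2 := band_alt (2*n-2) (u+n-1) (by omega) (v-u-1) (by omega)
  rw [show u+n-1+1+(v-u-1) = v+n-1 from by omega, show v-u-1 = v-1-u from by omega] at hb2
  rw [hP2, hQ2, hb1, hb2]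
end

section
/- Let n ≥ 3 and let 1 ≤ i ≤ n−1. Then in B_{2n−2} one has θ′((s_i s_{i−1} ⋯ s_2) s_1 (s_2⁻¹ s_3⁻¹ ⋯ s_i⁻¹)) = a_{i+n−1,i}, where for i = 1 the left-hand side is θ′(s_1). -/
namespace BraidAux
open Braid

lemma rel_one {m : ℕ} {r : FreeGroup (Fin m)} (h : r ∈ braidRels m) :
    PresentedGroup.mk (braidRels m) r = 1 :=
  (QuotientGroup.eq_one_iff r).mpr (Subgroup.subset_normalClosure h)

lemma sigma_comm (m : ℕ) (s k : ℕ) (h : s + 2 ≤ k) :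
    σ m s * σ m k = σ m k * σ m s := by
  unfold σ
  split_ifs with h1 h2 h2
  · have hr : (FreeGroup.of (⟨s-1, by omega⟩ : Fin (m-1)) * FreeGroup.of (⟨k-1, by omega⟩ : Fin (m-1)) *
        (FreeGroup.of (⟨k-1, by omega⟩ : Fin (m-1)) * FreeGroup.of (⟨s-1, by omega⟩ : Fin (m-1)))⁻¹) ∈ braidRels (m-1) := by
      exact Or.inl ⟨⟨s-1, by omega⟩, ⟨k-1, by omega⟩, by simp; omega, rfl⟩
    have := rel_one hr
    rw [map_mul, map_mul, map_inv] at this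
    exact mul_inv_eq_one.mp this
  · simp
  · simp
  · simp

lemma braid_rel (m : ℕ) (k : ℕ) (h1 : 1 ≤ k) (h2 : k + 1 ≤ m - 1) :
    σ m k * σ m (k+1) * σ m k = σ m (k+1) * σ m k * σ m (k+1) := by
  unfold σ
  rw [dif_pos ⟨h1, by omega⟩, dif_pos ⟨by omega, h2⟩]
  have hr : (FreeGroup.of (⟨k-1, by omega⟩ : Fin (m-1)) * FreeGroup.of (⟨k, by omega⟩ : Fin (m-1)) *
        FreeGroup.of (⟨k-1, by omega⟩ : Fin (m-1)) *
        (FreeGroup.of (⟨k, by omega⟩ : Fin (m-1)) * FreeGroup.of (⟨k-1, by omega⟩ : Fin (m-1)) *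
         FreeGroup.of (⟨k, by omega⟩ : Fin (m-1)))⁻¹) ∈ braidRels (m-1) := by
    exact Or.inr ⟨⟨k-1, by omega⟩, ⟨k, by omega⟩, by simp; omega, rfl⟩
  have := rel_one hr
  rw [map_mul, map_mul, map_mul, map_inv] at this
  have h3 := mul_inv_eq_one.mp this
  have h4 : (⟨k+1-1, by omega⟩ : Fin (m-1)) = ⟨k, by omega⟩ := by simp
  rw [h4]
  exact h3

lemma sigmaBr_nil (m : ℕ) {j i : ℕ} (h : j ≤ i) : sigmaBr m j i = 1 := by
  unfold sigmaBr
  rw [Nat.sub_eq_zero_of_le h]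
  simp

lemma sigmaBr_succ_left (m : ℕ) {j i : ℕ} (h : i ≤ j) :
    sigmaBr m (j+1) i = σ m j * sigmaBr m j i := by
  unfold sigmaBr
  have h5 : j + 1 - i = (j - i) + 1 := by omega
  rw [h5, List.range_succ_eq_map]
  simp only [List.map_cons, List.map_map, List.prod_cons]
  have h0 : j + 1 - 1 - 0 = j := by omega
  rw [h0]
  congr 1
  apply congrArg
  apply List.map_congr_left
  intro k hk
  simp only [Function.comp_apply]
  congr 1
  omega

lemma sigmaBr_succ_right (m : ℕ) {j i : ℕ} (h : i + 1 ≤ j) :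
    sigmaBr m j i = sigmaBr m j (i+1) * σ m i := by
  unfold sigmaBr
  have h5 : j - i = (j - (i+1)) + 1 := by omega
  rw [h5, List.range_succ]
  rw [List.map_append, List.prod_append]
  simp
  congr 1
  omega

lemma sigma_comm_sigmaBr (m : ℕ) (s : ℕ) {t j : ℕ} (h : s + 2 ≤ j) :
    σ m s * sigmaBr m t j = sigmaBr m t j * σ m s := by
  induction t with
  | zero => rw [sigmaBr_nil m (by omega)]; simp
  | succ t ih =>
    by_cases ht : j ≤ t
    · rw [sigmaBr_succ_left m ht, ← mul_assoc, sigma_comm m s t (by omega), mul_assoc, ih,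
        ← mul_assoc]
    · rw [sigmaBr_nil m (by omega)]; simp

lemma conj_key {G : Type*} [Group G] (a b V : G) (h1 : a * V = V * a)
    (h2 : a * b * a = b * a * b) :
    a * (V * b * a * (V * b)⁻¹) * a⁻¹ = V * b * V⁻¹ := by
  have c : Commute a V := h1
  have c2 : a⁻¹ * V⁻¹ = V⁻¹ * a⁻¹ := (c.inv_inv).eq
  calc a * (V * b * a * (V * b)⁻¹) * a⁻¹
      = (a * V) * (b * a * b⁻¹) * (V⁻¹ * a⁻¹) := by group
    _ = (V * a) * (b * a * b⁻¹) * (a⁻¹ * V⁻¹) := by rw [h1, c2]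
    _ = V * (a * b * a) * (b⁻¹ * a⁻¹) * V⁻¹ := by group
    _ = V * (b * a * b) * (b⁻¹ * a⁻¹) * V⁻¹ := by rw [h2]
    _ = V * b * V⁻¹ := by group

lemma bandGen_self (m j : ℕ) : bandGen m (j+1) j = σ m j := by
  unfold bandGen
  rw [sigmaBr_nil m (le_refl (j+1))]
  group

lemma bandGen_succ (m t s : ℕ) (h : s + 1 ≤ t) :
    σ m t * bandGen m t s * (σ m t)⁻¹ = bandGen m (t+1) s := by
  unfold bandGen
  rw [sigmaBr_succ_left m h]
  group

lemma bandGen_conj (m t s : ℕ) (hs : 1 ≤ s) (hst : s + 2 ≤ t) (hm : s + 1 ≤ m - 1) :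
    σ m s * bandGen m t s * (σ m s)⁻¹ = bandGen m t (s+1) := by
  unfold bandGen
  rw [sigmaBr_succ_right m (show (s+1)+1 ≤ t from hst)]
  exact conj_key _ _ _ (sigma_comm_sigmaBr m s (le_refl (s+2))) (braid_rel m s hs hm)

end BraidAux

/-- for `1 ≤ i ≤ n-1`, one has
`θ'((s_i⋯s_2) s_1 (s_2⁻¹⋯s_i⁻¹)) = a_{i+n-1,i}` in `B_{2n-2}`. -/
theorem theta_of_conjugated_s1 (n : ℕ) (hn : 3 ≤ n) (i : ℕ) (hi1 : 1 ≤ i) (hi : i ≤ n - 1)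
    (θ' : Braid.ArtinTitsB (n - 1) →* Braid.BraidGroup (2 * n - 2))
    (hθ1 : θ' (Braid.sGen (n - 1) 1) = Braid.bandGen (2 * n - 2) n 1)
    (hθ2 : ∀ j, 2 ≤ j → j ≤ n - 1 →
      θ' (Braid.sGen (n - 1) j) =
        Braid.bandGen (2 * n - 2) j (j - 1) *
        Braid.bandGen (2 * n - 2) (j + n - 1) (j + n - 2)) :
    θ' (((List.range (i - 1)).map (fun k => Braid.sGen (n - 1) (i - k))).prod *
        Braid.sGen (n - 1) 1 *
        ((List.range (i - 1)).map (fun k => (Braid.sGen (n - 1) (2 + k))⁻¹)).prod) =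
      Braid.bandGen (2 * n - 2) (i + n - 1) i := by
  revert hi
  induction i, hi1 using Nat.le_induction with
  | base =>
    intro hi
    simp only [Nat.sub_self, List.range_zero, List.map_nil, List.prod_nil, one_mul, mul_one]
    rw [hθ1, show 1 + n - 1 = n by omega]
  | succ i hi1 ih =>
    intro hi
    have hih := ih (by omega)
    have hL : ((List.range (i+1-1)).map (fun k => Braid.sGen (n-1) (i+1-k))).prod =
        Braid.sGen (n-1) (i+1) *
          ((List.range (i-1)).map (fun k => Braid.sGen (n-1) (i-k))).prod := by
      rw [show i+1-1 = (i-1)+1 by omega, List.range_succ_eq_map]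
      simp only [List.map_cons, List.map_map, List.prod_cons, Nat.sub_zero]
      congr 1
      apply congrArg
      apply List.map_congr_left
      intro k hk
      simp only [Function.comp_apply]
      congr 1
      omega
    have hR : ((List.range (i+1-1)).map (fun k => (Braid.sGen (n-1) (2+k))⁻¹)).prod =
        ((List.range (i-1)).map (fun k => (Braid.sGen (n-1) (2+k))⁻¹)).prod *
          (Braid.sGen (n-1) (i+1))⁻¹ := by
      rw [show i+1-1 = (i-1)+1 by omega, List.range_succ, List.map_append, List.prod_append]
      simp only [List.map_cons, List.map_nil, List.prod_cons, List.prod_nil, mul_one]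
      congr 3
      omega
    rw [hL, hR]
    have key : Braid.sGen (n-1) (i+1) *
          ((List.range (i-1)).map (fun k => Braid.sGen (n-1) (i-k))).prod *
          Braid.sGen (n-1) 1 *
          (((List.range (i-1)).map (fun k => (Braid.sGen (n-1) (2+k))⁻¹)).prod *
            (Braid.sGen (n-1) (i+1))⁻¹) =
        Braid.sGen (n-1) (i+1) *
          (((List.range (i-1)).map (fun k => Braid.sGen (n-1) (i-k))).prod *
            Braid.sGen (n-1) 1 *
            ((List.range (i-1)).map (fun k => (Braid.sGen (n-1) (2+k))⁻¹)).prod) *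
          (Braid.sGen (n-1) (i+1))⁻¹ := by group
    rw [key, map_mul, map_mul, map_inv, hih]
    have hs := hθ2 (i+1) (by omega) hi
    rw [show i+1-1 = i by omega, show i+1+n-1 = (i+n-1)+1 by omega,
      show i+1+n-2 = i+n-1 by omega] at hs
    rw [hs, BraidAux.bandGen_self, BraidAux.bandGen_self]
    have e1 := BraidAux.bandGen_succ (2*n-2) (i+n-1) i (by omega)
    rw [show i+n-1+1 = i+n by omega] at e1
    have e2 := BraidAux.bandGen_conj (2*n-2) (i+n) i hi1 (by omega) (by omega)
    calc Braid.σ (2*n-2) i * Braid.σ (2*n-2) (i+n-1) * Braid.bandGen (2*n-2) (i+n-1) i *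
          (Braid.σ (2*n-2) i * Braid.σ (2*n-2) (i+n-1))⁻¹
        = Braid.σ (2*n-2) i *
            (Braid.σ (2*n-2) (i+n-1) * Braid.bandGen (2*n-2) (i+n-1) i *
              (Braid.σ (2*n-2) (i+n-1))⁻¹) * (Braid.σ (2*n-2) i)⁻¹ := by group
      _ = Braid.σ (2*n-2) i * Braid.bandGen (2*n-2) (i+n) i * (Braid.σ (2*n-2) i)⁻¹ := by
          rw [e1]
      _ = Braid.bandGen (2*n-2) (i+n) (i+1) := e2
      _ = Braid.bandGen (2*n-2) (i+1+n-1) (i+1) := by rw [show i+1+n-1 = i+n by omega]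
end
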